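/- Let S, A, A† be nonempty finite subsets of normed spaces, each with ℓ1 diameter at most 1, let γ ∈ [0, 1), and let d_r, d_P ≥ 0 with γ d_P / 2 < 1. Let r̄ : S × A × Δ(A†) → ℝ and P̄ : S × A × Δ(A†) → Δ(S) satisfy, for all s, s′ ∈ S, a ∈ A, π, π′ ∈ Δ(A†): |r̄(s, a, π) − r̄(s′, a, π′)| ≤ d_r (‖s − s′‖₁ + ‖π − π′‖₁) and ‖P̄(·|s, a, π) − P̄(·|s′, a, π′)‖₁ ≤ d_P (‖s − s′‖₁ + ‖π − π′‖₁). For each π ∈ Δ(A†), let Q*_π be the unique fixed point of the Bellman operator (T_π Q)(s) = max_{a ∈ A} [ r̄(s, a, π) + γ ∑_{s′} Q(s′) P̄(s′|s, a, π) ]. Set d_Q = d_r / (1 − γ d_P / 2). Then for all π₁, π₂ ∈ Δ(A†), ‖Q*_{π₁} − Q*_{π₂}‖_∞ ≤ d₀ ‖π₁ − π₂‖₁, where d₀ = (d_r + γ d_P d_Q / 2) / (1 − γ). -/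
import Mathlib

/-- The probability simplex over a finite subset `A` of a type, as functions. -/
def simplexOn {U : Type*} (A : Finset U) : Set (U → ℝ) :=
  {p | (∀ a ∈ A, 0 ≤ p a) ∧ ∑ a ∈ A, p a = 1}

/-- Bellman optimality operator of a discounted MDP with finite state set `S`,
finite action set `A`, reward `rbar` and transition kernel `Pbar`. -/
noncomputable def bellman {V W : Type*} [NormedAddCommGroup V] [NormedAddCommGroup W]
    (S : Finset V) (A : Finset W) (hA : A.Nonempty) (γ : ℝ)
    (rbar : V → W → ℝ) (Pbar : V → W → V → ℝ) (Q : V → ℝ) : V → ℝ :=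
  fun s => A.sup' hA (fun a => rbar s a + γ * ∑ s' ∈ S, Q s' * Pbar s a s')

lemma span_trick {V : Type*} (S : Finset V) (hS : S.Nonempty)
    (f p q : V → ℝ) (h : ∑ s ∈ S, p s = ∑ s ∈ S, q s) :
    |∑ s ∈ S, f s * (p s - q s)|
      ≤ ((S.sup' hS f - S.inf' hS f) / 2) * ∑ s ∈ S, |p s - q s| := by
  set c := (S.sup' hS f + S.inf' hS f) / 2 with hc
  have key : ∑ s ∈ S, f s * (p s - q s) = ∑ s ∈ S, (f s - c) * (p s - q s) := by
    simp only [sub_mul, Finset.sum_sub_distrib, mul_sub, ← Finset.mul_sum, h]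
    ring
  rw [key]
  calc |∑ s ∈ S, (f s - c) * (p s - q s)|
      ≤ ∑ s ∈ S, |(f s - c) * (p s - q s)| := Finset.abs_sum_le_sum_abs _ _
    _ ≤ ∑ s ∈ S, ((S.sup' hS f - S.inf' hS f) / 2) * |p s - q s| := by
        apply Finset.sum_le_sum
        intro s hs
        rw [abs_mul]
        apply mul_le_mul_of_nonneg_right _ (abs_nonneg _)
        rw [abs_le]
        have h1 : f s ≤ S.sup' hS f := Finset.le_sup' f hs
        have h2 : S.inf' hS f ≤ f s := Finset.inf'_le f hs
        constructor <;> simp only [hc] <;> linarith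
    _ = ((S.sup' hS f - S.inf' hS f) / 2) * ∑ s ∈ S, |p s - q s| := by
        rw [Finset.mul_sum]

lemma abs_sup'_sub_sup'_le' {W : Type*} (A : Finset W) (hA : A.Nonempty)
    (f g : W → ℝ) (B : ℝ) (h : ∀ a ∈ A, |f a - g a| ≤ B) :
    |A.sup' hA f - A.sup' hA g| ≤ B := by
  rw [abs_le]
  constructor
  · have : A.sup' hA g ≤ A.sup' hA f + B := by
      apply Finset.sup'_le
      intro a ha
      have h1 := abs_le.mp (h a ha)
      have h2 : f a ≤ A.sup' hA f := Finset.le_sup' f ha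
      linarith [h1.1]
    linarith
  · have : A.sup' hA f ≤ A.sup' hA g + B := by
      apply Finset.sup'_le
      intro a ha
      have h1 := abs_le.mp (h a ha)
      have h2 : g a ≤ A.sup' hA g := Finset.le_sup' g ha
      linarith [h1.2]
    linarith

/-- Lipschitz dependence of the optimal Q-function on the opponent's policy:
with `d_Q = d_r / (1 − γ d_P / 2)` and `d₀ = (d_r + γ d_P d_Q / 2)/(1 − γ)`,
`‖Q*_{π₁} − Q*_{π₂}‖_∞ ≤ d₀ ‖π₁ − π₂‖₁` for all `π₁, π₂ ∈ Δ(A†)`. -/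
theorem qstar_lipschitz_in_policy
    {V W U : Type*} [NormedAddCommGroup V] [NormedAddCommGroup W] [NormedAddCommGroup U]
    (S : Finset V) (A : Finset W) (Adag : Finset U)
    (hS : S.Nonempty) (hA : A.Nonempty) (hAdag : Adag.Nonempty)
    (hSdiam : ∀ s₁ ∈ S, ∀ s₂ ∈ S, ‖s₁ - s₂‖ ≤ 1)
    (hAdiam : ∀ a₁ ∈ A, ∀ a₂ ∈ A, ‖a₁ - a₂‖ ≤ 1)
    (hAdagdiam : ∀ b₁ ∈ Adag, ∀ b₂ ∈ Adag, ‖b₁ - b₂‖ ≤ 1)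
    (γ : ℝ) (hγ0 : 0 ≤ γ) (hγ1 : γ < 1)
    (d_r d_P : ℝ) (hdr : 0 ≤ d_r) (hdP : 0 ≤ d_P) (hγdP : γ * d_P / 2 < 1)
    (rbar : V → W → (U → ℝ) → ℝ) (Pbar : V → W → (U → ℝ) → V → ℝ)
    (hr : ∀ a ∈ A, ∀ s₁ ∈ S, ∀ s₂ ∈ S, ∀ π₁ ∈ simplexOn Adag, ∀ π₂ ∈ simplexOn Adag,
      |rbar s₁ a π₁ - rbar s₂ a π₂|
        ≤ d_r * (‖s₁ - s₂‖ + ∑ b ∈ Adag, |π₁ b - π₂ b|))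
    (hPmem : ∀ s ∈ S, ∀ a ∈ A, ∀ π ∈ simplexOn Adag,
      (∀ s' ∈ S, 0 ≤ Pbar s a π s') ∧ ∑ s' ∈ S, Pbar s a π s' = 1)
    (hPlip : ∀ a ∈ A, ∀ s₁ ∈ S, ∀ s₂ ∈ S, ∀ π₁ ∈ simplexOn Adag, ∀ π₂ ∈ simplexOn Adag,
      ∑ s' ∈ S, |Pbar s₁ a π₁ s' - Pbar s₂ a π₂ s'|
        ≤ d_P * (‖s₁ - s₂‖ + ∑ b ∈ Adag, |π₁ b - π₂ b|))
    (Qstar : (U → ℝ) → V → ℝ)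
    (hQ : ∀ π ∈ simplexOn Adag, ∀ s,
      Qstar π s
        = bellman S A hA γ (fun s a => rbar s a π) (fun s a => Pbar s a π)
            (Qstar π) s) :
    ∀ π₁ ∈ simplexOn Adag, ∀ π₂ ∈ simplexOn Adag,
      S.sup' hS (fun s => |Qstar π₁ s - Qstar π₂ s|)
        ≤ ((d_r + γ * d_P * (d_r / (1 - γ * d_P / 2)) / 2) / (1 - γ))
            * ∑ b ∈ Adag, |π₁ b - π₂ b| := by
  have hden : (0:ℝ) < 1 - γ * d_P / 2 := by linarith
  set dQ := d_r / (1 - γ * d_P / 2) with hdQdef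
  have hdQ0 : 0 ≤ dQ := div_nonneg hdr hden.le
  -- span bound for each fixed point
  have span_bound : ∀ π ∈ simplexOn Adag,
      S.sup' hS (Qstar π) - S.inf' hS (Qstar π) ≤ dQ := by
    intro π hπ
    set K := S.sup' hS (Qstar π) - S.inf' hS (Qstar π) with hK
    have hK0 : 0 ≤ K := by
      obtain ⟨s, hs⟩ := hS
      have h1 := Finset.inf'_le (Qstar π) hs
      have h2 := Finset.le_sup' (Qstar π) hs
      simp only [hK]; linarith
    have hzero : ∑ b ∈ Adag, |π b - π b| = 0 := by simp
    have step : ∀ s₁ ∈ S, ∀ s₂ ∈ S,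
        |Qstar π s₁ - Qstar π s₂| ≤ d_r + γ * (d_P * (K / 2)) := by
      intro s₁ hs₁ s₂ hs₂
      have hnorm1 : ‖s₁ - s₂‖ ≤ 1 := hSdiam s₁ hs₁ s₂ hs₂
      have hnorm0 : 0 ≤ ‖s₁ - s₂‖ := norm_nonneg _
      rw [hQ π hπ s₁, hQ π hπ s₂]
      unfold bellman
      apply abs_sup'_sub_sup'_le'
      intro a ha
      have hr' := hr a ha s₁ hs₁ s₂ hs₂ π hπ π hπ
      have hP' := hPlip a ha s₁ hs₁ s₂ hs₂ π hπ π hπ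
      rw [hzero, add_zero] at hr' hP'
      have hsum1 := (hPmem s₁ hs₁ a ha π hπ).2
      have hsum2 := (hPmem s₂ hs₂ a ha π hπ).2
      have hst := span_trick S hS (Qstar π) (fun s' => Pbar s₁ a π s')
        (fun s' => Pbar s₂ a π s') (by rw [hsum1, hsum2])
      have hdiff : ∑ s' ∈ S, Qstar π s' * Pbar s₁ a π s'
          - ∑ s' ∈ S, Qstar π s' * Pbar s₂ a π s'
          = ∑ s' ∈ S, Qstar π s' * (Pbar s₁ a π s' - Pbar s₂ a π s') := by
        rw [← Finset.sum_sub_distrib]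
        exact Finset.sum_congr rfl fun s' _ => by ring
      have hXs : |∑ s' ∈ S, Qstar π s' * Pbar s₁ a π s'
          - ∑ s' ∈ S, Qstar π s' * Pbar s₂ a π s'| ≤ (K / 2) * (d_P * ‖s₁ - s₂‖) := by
        rw [hdiff]
        calc |∑ s' ∈ S, Qstar π s' * (Pbar s₁ a π s' - Pbar s₂ a π s')|
            ≤ (K / 2) * ∑ s' ∈ S, |Pbar s₁ a π s' - Pbar s₂ a π s'| := hst
          _ ≤ (K / 2) * (d_P * ‖s₁ - s₂‖) := by
              apply mul_le_mul_of_nonneg_left hP' (by linarith)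
      have key : (rbar s₁ a π + γ * ∑ s' ∈ S, Qstar π s' * Pbar s₁ a π s')
          - (rbar s₂ a π + γ * ∑ s' ∈ S, Qstar π s' * Pbar s₂ a π s')
          = (rbar s₁ a π - rbar s₂ a π)
            + γ * ((∑ s' ∈ S, Qstar π s' * Pbar s₁ a π s')
              - ∑ s' ∈ S, Qstar π s' * Pbar s₂ a π s') := by ring
      simp only [key]
      calc |(rbar s₁ a π - rbar s₂ a π)
            + γ * ((∑ s' ∈ S, Qstar π s' * Pbar s₁ a π s')
              - ∑ s' ∈ S, Qstar π s' * Pbar s₂ a π s')|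
          ≤ |rbar s₁ a π - rbar s₂ a π|
            + |γ * ((∑ s' ∈ S, Qstar π s' * Pbar s₁ a π s')
              - ∑ s' ∈ S, Qstar π s' * Pbar s₂ a π s')| := abs_add_le _ _
        _ ≤ d_r + γ * (d_P * (K / 2)) := by
            rw [abs_mul, abs_of_nonneg hγ0]
            have := mul_le_mul_of_nonneg_left hXs hγ0
            nlinarith [mul_le_mul_of_nonneg_left hnorm1 (mul_nonneg hγ0 (mul_nonneg hdP (by linarith : (0:ℝ) ≤ K/2)))]
    obtain ⟨smax, hsmax, hmax⟩ := Finset.exists_mem_eq_sup' hS (Qstar π)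
    obtain ⟨smin, hsmin, hmin⟩ := Finset.exists_mem_eq_inf' hS (Qstar π)
    have hKeq : K = Qstar π smax - Qstar π smin := by rw [hK, hmax, hmin]
    have := step smax hsmax smin hsmin
    have hKle : K ≤ d_r + γ * (d_P * (K / 2)) := by
      have h2 := le_trans (le_abs_self _) this
      linarith [hKeq.le, hKeq.ge]
    rw [hdQdef, le_div_iff₀ hden]
    nlinarith
  intro π₁ hπ₁ π₂ hπ₂
  set D := ∑ b ∈ Adag, |π₁ b - π₂ b| with hD
  have hD0 : 0 ≤ D := Finset.sum_nonneg fun b _ => abs_nonneg _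
  set M := S.sup' hS (fun s => |Qstar π₁ s - Qstar π₂ s|) with hM
  have hM0 : 0 ≤ M := by
    obtain ⟨s, hs⟩ := hS
    exact le_trans (abs_nonneg _) (Finset.le_sup' (fun s => |Qstar π₁ s - Qstar π₂ s|) hs)
  have hK2 := span_bound π₂ hπ₂
  have hK20 : 0 ≤ S.sup' hS (Qstar π₂) - S.inf' hS (Qstar π₂) := by
    obtain ⟨s, hs⟩ := hS
    have h1 := Finset.inf'_le (Qstar π₂) hs
    have h2 := Finset.le_sup' (Qstar π₂) hs
    linarith
  have step : ∀ s ∈ S, |Qstar π₁ s - Qstar π₂ s|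
      ≤ d_r * D + γ * (M + dQ / 2 * (d_P * D)) := by
    intro s hs
    rw [hQ π₁ hπ₁ s, hQ π₂ hπ₂ s]
    unfold bellman
    apply abs_sup'_sub_sup'_le'
    intro a ha
    have hr' := hr a ha s hs s hs π₁ hπ₁ π₂ hπ₂
    have hP' := hPlip a ha s hs s hs π₁ hπ₁ π₂ hπ₂
    rw [sub_self, norm_zero, zero_add] at hr' hP'
    have hPm1 := hPmem s hs a ha π₁ hπ₁
    have hPm2 := hPmem s hs a ha π₂ hπ₂
    -- decomposition
    have hdecomp : (∑ s' ∈ S, Qstar π₁ s' * Pbar s a π₁ s')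
        - ∑ s' ∈ S, Qstar π₂ s' * Pbar s a π₂ s'
        = (∑ s' ∈ S, (Qstar π₁ s' - Qstar π₂ s') * Pbar s a π₁ s')
          + ∑ s' ∈ S, Qstar π₂ s' * (Pbar s a π₁ s' - Pbar s a π₂ s') := by
      rw [← Finset.sum_sub_distrib, ← Finset.sum_add_distrib]
      exact Finset.sum_congr rfl fun s' _ => by ring
    have hb1 : |∑ s' ∈ S, (Qstar π₁ s' - Qstar π₂ s') * Pbar s a π₁ s'| ≤ M := by
      calc |∑ s' ∈ S, (Qstar π₁ s' - Qstar π₂ s') * Pbar s a π₁ s'|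
          ≤ ∑ s' ∈ S, |(Qstar π₁ s' - Qstar π₂ s') * Pbar s a π₁ s'| :=
            Finset.abs_sum_le_sum_abs _ _
        _ ≤ ∑ s' ∈ S, M * Pbar s a π₁ s' := by
            apply Finset.sum_le_sum
            intro s' hs'
            rw [abs_mul, abs_of_nonneg (hPm1.1 s' hs')]
            exact mul_le_mul_of_nonneg_right
              (Finset.le_sup' (fun s => |Qstar π₁ s - Qstar π₂ s|) hs')
              (hPm1.1 s' hs')
        _ = M := by rw [← Finset.mul_sum, hPm1.2, mul_one]
    have hst := span_trick S hS (Qstar π₂) (fun s' => Pbar s a π₁ s')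
      (fun s' => Pbar s a π₂ s') (by rw [hPm1.2, hPm2.2])
    have hb2 : |∑ s' ∈ S, Qstar π₂ s' * (Pbar s a π₁ s' - Pbar s a π₂ s')|
        ≤ dQ / 2 * (d_P * D) := by
      calc |∑ s' ∈ S, Qstar π₂ s' * (Pbar s a π₁ s' - Pbar s a π₂ s')|
          ≤ ((S.sup' hS (Qstar π₂) - S.inf' hS (Qstar π₂)) / 2)
            * ∑ s' ∈ S, |Pbar s a π₁ s' - Pbar s a π₂ s'| := hst
        _ ≤ (dQ / 2) * (d_P * D) := by
            apply mul_le_mul (by linarith) hP'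
              (Finset.sum_nonneg fun s' _ => abs_nonneg _) (by linarith)
    have key : (rbar s a π₁ + γ * ∑ s' ∈ S, Qstar π₁ s' * Pbar s a π₁ s')
        - (rbar s a π₂ + γ * ∑ s' ∈ S, Qstar π₂ s' * Pbar s a π₂ s')
        = (rbar s a π₁ - rbar s a π₂)
          + γ * ((∑ s' ∈ S, Qstar π₁ s' * Pbar s a π₁ s')
            - ∑ s' ∈ S, Qstar π₂ s' * Pbar s a π₂ s') := by ring
    simp only [key]
    calc |(rbar s a π₁ - rbar s a π₂)
          + γ * ((∑ s' ∈ S, Qstar π₁ s' * Pbar s a π₁ s')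
            - ∑ s' ∈ S, Qstar π₂ s' * Pbar s a π₂ s')|
        ≤ |rbar s a π₁ - rbar s a π₂|
          + |γ * ((∑ s' ∈ S, Qstar π₁ s' * Pbar s a π₁ s')
            - ∑ s' ∈ S, Qstar π₂ s' * Pbar s a π₂ s')| := abs_add_le _ _
      _ ≤ d_r * D + γ * (M + dQ / 2 * (d_P * D)) := by
          rw [abs_mul, abs_of_nonneg hγ0, hdecomp]
          have habs : |(∑ s' ∈ S, (Qstar π₁ s' - Qstar π₂ s') * Pbar s a π₁ s')
              + ∑ s' ∈ S, Qstar π₂ s' * (Pbar s a π₁ s' - Pbar s a π₂ s')|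
              ≤ M + dQ / 2 * (d_P * D) :=
            le_trans (abs_add_le _ _) (by linarith)
          have := mul_le_mul_of_nonneg_left habs hγ0
          linarith
  have hMle : M ≤ d_r * D + γ * (M + dQ / 2 * (d_P * D)) :=
    Finset.sup'_le hS _ step
  rw [div_mul_eq_mul_div, le_div_iff₀ (by linarith : (0:ℝ) < 1 - γ)]
  nlinarith
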